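/- Let μ_1, μ_0 and ν_1, ν_0 be probability measures on ℝ^d, let η̂_1, η̂_0 : ℝ^d → [0,1] be measurable with m̂_s := ∫ η̂_s dμ_s > 0 and ∫ η̂_s dν_s > 0 for s ∈ {0,1}, and let p̂_1, p̂_0 > 0. For θ ∈ ℝ define the classifier ĝ_θ by ĝ_θ(x,1) := 1{1 ≤ η̂_1(x)·(2 − θ/p̂_1)} and ĝ_θ(x,0) := 1{1 ≤ η̂_0(x)·(2 + θ/p̂_0)}, and define the empirical unfairness Δ̂(ĝ_θ) := |∫ η̂_1·ĝ_θ(·,1) dν_1 / ∫ η̂_1 dν_1 − ∫ η̂_0·ĝ_θ(·,0) dν_0 / ∫ η̂_0 dν_0|. Then for every θ ∈ ℝ: Δ̂(ĝ_θ) ≤ |∫ η̂_1·ĝ_θ(·,1) dμ_1 / m̂_1 − ∫ η̂_0·ĝ_θ(·,0) dμ_0 / m̂_0| + 2·sup_{t∈[0,1]} |∫ η̂_1·1{t ≤ η̂_1} dμ_1 − ∫ η̂_1·1{t ≤ η̂_1} dν_1| / m̂_1 + 2·sup_{t∈[0,1]} |∫ η̂_0·1{t ≤ η̂_0} dμ_0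 − ∫ η̂_0·1{t ≤ η̂_0} dν_0| / m̂_0. -/

import Mathlib

open MeasureTheory Set


lemma my_int {α : Type*} [MeasurableSpace α] (μ : Measure α) [IsProbabilityMeasure μ]
    {f : α → ℝ} (hf : Measurable f) (hb : ∀ x, f x ∈ Icc (0:ℝ) 1) : Integrable f μ := by
  apply Integrable.mono' (integrable_const (1:ℝ)) hf.aestronglyMeasurable
  filter_upwards with x
  rw [Real.norm_eq_abs, abs_of_nonneg (hb x).1]
  exact (hb x).2

lemma key_bound {d : ℕ} (μ ν : Measure (Fin d → ℝ))
    [IsProbabilityMeasure μ] [IsProbabilityMeasure ν]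
    (η : (Fin d → ℝ) → ℝ) (hm : Measurable η) (h01 : ∀ x, η x ∈ Icc (0:ℝ) 1)
    (m : ℝ) (hmdef : m = ∫ x, η x ∂μ) (hmpos : 0 < m) (hνpos : 0 < ∫ x, η x ∂ν) (c : ℝ) :
    |(∫ x, η x * (if 1 ≤ η x * c then (1:ℝ) else 0) ∂ν) / (∫ x, η x ∂ν)
      - (∫ x, η x * (if 1 ≤ η x * c then (1:ℝ) else 0) ∂μ) / m|
    ≤ 2 * (⨆ t ∈ Icc (0:ℝ) 1,
        |(∫ x, η x * (if t ≤ η x then (1:ℝ) else 0) ∂μ)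
          - (∫ x, η x * (if t ≤ η x then (1:ℝ) else 0) ∂ν)|) / m := by
  set D := ⨆ t ∈ Icc (0:ℝ) 1,
        |(∫ x, η x * (if t ≤ η x then (1:ℝ) else 0) ∂μ)
          - (∫ x, η x * (if t ≤ η x then (1:ℝ) else 0) ∂ν)| with hDdef
  -- basic : each integrand measurable & in [0,1]
  have hbnd : ∀ (g : (Fin d → ℝ) → ℝ), (∀ x, g x ∈ Icc (0:ℝ) 1) →
      ∀ x, η x * g x ∈ Icc (0:ℝ) 1 := by
    intro g hg x
    constructor
    · exact mul_nonneg (h01 x).1 (hg x).1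
    · calc η x * g x ≤ 1 * 1 := by
            apply mul_le_mul (h01 x).2 (hg x).2 (hg x).1 zero_le_one
        _ = 1 := by ring
  have hif01 : ∀ (t : ℝ) (x : (Fin d → ℝ)), (if t ≤ η x then (1:ℝ) else 0) ∈ Icc (0:ℝ) 1 := by
    intro t x; split <;> simp
  have hifm : ∀ t : ℝ, Measurable fun x => η x * (if t ≤ η x then (1:ℝ) else 0) := by
    intro t
    exact hm.mul (Measurable.ite (measurableSet_le measurable_const hm)
      measurable_const measurable_const)
  have hintμ : ∀ t : ℝ, Integrable (fun x => η x * (if t ≤ η x then (1:ℝ) else 0)) μ :=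
    fun t => my_int μ (hifm t) (fun x => hbnd _ (hif01 t) x)
  have hintν : ∀ t : ℝ, Integrable (fun x => η x * (if t ≤ η x then (1:ℝ) else 0)) ν :=
    fun t => my_int ν (hifm t) (fun x => hbnd _ (hif01 t) x)
  have hIbound : ∀ (ρ : Measure (Fin d → ℝ)) [IsProbabilityMeasure ρ], ∀ t : ℝ,
      (∫ x, η x * (if t ≤ η x then (1:ℝ) else 0) ∂ρ) ∈ Icc (0:ℝ) 1 := by
    intro ρ _ t
    constructor
    · exact integral_nonneg fun x => (hbnd _ (hif01 t) x).1
    · calc (∫ x, η x * (if t ≤ η x then (1:ℝ) else 0) ∂ρ) ≤ ∫ _x, (1:ℝ) ∂ρ := by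
            apply integral_mono (my_int ρ (hifm t) (fun x => hbnd _ (hif01 t) x))
              (integrable_const 1)
            intro x; exact (hbnd _ (hif01 t) x).2
        _ = 1 := by simp
  have hDbdd : BddAbove (range fun t : ℝ => ⨆ _ : t ∈ Icc (0:ℝ) 1,
      |(∫ x, η x * (if t ≤ η x then (1:ℝ) else 0) ∂μ)
        - (∫ x, η x * (if t ≤ η x then (1:ℝ) else 0) ∂ν)|) := by
    refine ⟨2, fun y hy => ?_⟩
    obtain ⟨t, rfl⟩ := hy
    apply Real.iSup_le _ (by norm_num)
    intro _
    have h1 := hIbound μ t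
    have h2 := hIbound ν t
    rw [abs_sub_le_iff]
    constructor <;> linarith [h1.1, h1.2, h2.1, h2.2]
  have hDle : ∀ t ∈ Icc (0:ℝ) 1,
      |(∫ x, η x * (if t ≤ η x then (1:ℝ) else 0) ∂μ)
        - (∫ x, η x * (if t ≤ η x then (1:ℝ) else 0) ∂ν)| ≤ D :=
    fun t ht => by
      have h := le_ciSup hDbdd t
      rwa [ciSup_pos ht] at h
  have hD0 : 0 ≤ D := le_trans (abs_nonneg _) (hDle 0 (by norm_num))
  -- notation
  set Aν := ∫ x, η x * (if 1 ≤ η x * c then (1:ℝ) else 0) ∂ν with hAν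
  set Aμ := ∫ x, η x * (if 1 ≤ η x * c then (1:ℝ) else 0) ∂μ with hAμ
  set Nν := ∫ x, η x ∂ν with hNν
  -- Claim 1 : |Aμ - Aν| ≤ D
  have hclaim1 : |Aμ - Aν| ≤ D := by
    rcases lt_or_ge c 1 with hc | hc
    · have hzero : ∀ x, η x * (if 1 ≤ η x * c then (1:ℝ) else 0) = 0 := by
        intro x
        have : ¬ (1 ≤ η x * c) := by
          intro h
          rcases le_or_gt c 0 with h0 | h0
          · nlinarith [(h01 x).1]
          · nlinarith [(h01 x).1, (h01 x).2]
        simp [this]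
      have e1 : Aμ = 0 := by rw [hAμ]; simp only [hzero]; simp
      have e2 : Aν = 0 := by rw [hAν]; simp only [hzero]; simp
      rw [e1, e2]; simpa using hD0
    · have hcpos : (0:ℝ) < c := lt_of_lt_of_le one_pos hc
      have ht : 1 / c ∈ Icc (0:ℝ) 1 := by
        constructor
        · positivity
        · rw [div_le_one hcpos]; exact hc
      have heq : ∀ x, (if 1 ≤ η x * c then (1:ℝ) else 0) = (if 1/c ≤ η x then (1:ℝ) else 0) := by
        intro x
        congr 1
        rw [eq_iff_iff, div_le_iff₀ hcpos]
      have e1 : Aμ = ∫ x, η x * (if 1/c ≤ η x then (1:ℝ) else 0) ∂μ := by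
        rw [hAμ]; congr 1; funext x; rw [heq]
      have e2 : Aν = ∫ x, η x * (if 1/c ≤ η x then (1:ℝ) else 0) ∂ν := by
        rw [hAν]; congr 1; funext x; rw [heq]
      rw [e1, e2]
      exact hDle _ ht
  -- Claim 2 : |m - Nν| ≤ D
  have hclaim2 : |m - Nν| ≤ D := by
    have heq0 : ∀ (ρ : Measure (Fin d → ℝ)),
        (∫ x, η x * (if (0:ℝ) ≤ η x then (1:ℝ) else 0) ∂ρ) = ∫ x, η x ∂ρ := by
      intro ρ; congr 1; funext x
      rw [if_pos (h01 x).1, mul_one]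
    have := hDle 0 (by norm_num)
    rwa [heq0, heq0, ← hmdef, ← hNν] at this
  -- Claim 3 : bounds on Aν
  have hAν0 : 0 ≤ Aν := by
    apply integral_nonneg
    intro x
    apply mul_nonneg (h01 x).1
    split <;> norm_num
  have hAνle : Aν ≤ Nν := by
    rw [hAν, hNν]
    apply integral_mono _ (my_int ν hm h01)
    · intro x
      calc η x * (if 1 ≤ η x * c then (1:ℝ) else 0) ≤ η x * 1 := by
            apply mul_le_mul_of_nonneg_left _ (h01 x).1
            split <;> norm_num
        _ = η x := mul_one _
    · apply my_int ν (hm.mul (Measurable.ite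
        (measurableSet_le measurable_const (hm.mul_const c)) measurable_const measurable_const))
      intro x
      refine ⟨mul_nonneg (h01 x).1 (by beta_reduce; split <;> norm_num), ?_⟩
      calc η x * (if 1 ≤ η x * c then (1:ℝ) else 0) ≤ 1 * 1 := by
            apply mul_le_mul (h01 x).2 (by split <;> norm_num) (by split <;> norm_num) zero_le_one
        _ = 1 := by ring
  -- algebra
  have hNνne : Nν ≠ 0 := ne_of_gt hνpos
  have hmne : m ≠ 0 := ne_of_gt hmpos
  have hkey : Aν / Nν - Aμ / m = (Aν - Aμ) / m + Aν * (m - Nν) / (Nν * m) := by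
    field_simp
    ring
  rw [hkey]
  have h1 : |(Aν - Aμ) / m| ≤ D / m := by
    rw [abs_div, abs_of_pos hmpos]
    gcongr
    rw [abs_sub_comm]; exact hclaim1
  have h2 : |Aν * (m - Nν) / (Nν * m)| ≤ D / m := by
    rw [abs_div, abs_mul, abs_of_nonneg hAν0, abs_of_pos (mul_pos hνpos hmpos),
      div_le_div_iff₀ (mul_pos hνpos hmpos) hmpos]
    nlinarith [mul_le_mul hAνle hclaim2 (abs_nonneg (m - Nν)) hνpos.le, hmpos,
      abs_nonneg (m - Nν)]
  calc |(Aν - Aμ) / m + Aν * (m - Nν) / (Nν * m)|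
      ≤ |(Aν - Aμ) / m| + |Aν * (m - Nν) / (Nν * m)| := abs_add_le _ _
    _ ≤ D / m + D / m := add_le_add h1 h2
    _ = 2 * D / m := by ring

theorem stmt_13 {d : ℕ}
    (μ1 μ0 ν1 ν0 : Measure (Fin d → ℝ))
    [IsProbabilityMeasure μ1] [IsProbabilityMeasure μ0]
    [IsProbabilityMeasure ν1] [IsProbabilityMeasure ν0]
    (ηh1 ηh0 : (Fin d → ℝ) → ℝ) (hηh1m : Measurable ηh1) (hηh0m : Measurable ηh0)
    (hηh101 : ∀ x, ηh1 x ∈ Icc (0:ℝ) 1) (hηh001 : ∀ x, ηh0 x ∈ Icc (0:ℝ) 1)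
    (mh1 mh0 : ℝ) (hmh1 : mh1 = ∫ x, ηh1 x ∂μ1) (hmh0 : mh0 = ∫ x, ηh0 x ∂μ0)
    (hmh1pos : 0 < mh1) (hmh0pos : 0 < mh0)
    (hν1pos : 0 < ∫ x, ηh1 x ∂ν1) (hν0pos : 0 < ∫ x, ηh0 x ∂ν0)
    (ph1 ph0 : ℝ) (hph1 : 0 < ph1) (hph0 : 0 < ph0) :
    ∀ θ : ℝ,
      |(∫ x, ηh1 x * (if 1 ≤ ηh1 x * (2 - θ / ph1) then (1:ℝ) else 0) ∂ν1)
            / (∫ x, ηh1 x ∂ν1)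
        - (∫ x, ηh0 x * (if 1 ≤ ηh0 x * (2 + θ / ph0) then (1:ℝ) else 0) ∂ν0)
            / (∫ x, ηh0 x ∂ν0)|
      ≤ |(∫ x, ηh1 x * (if 1 ≤ ηh1 x * (2 - θ / ph1) then (1:ℝ) else 0) ∂μ1) / mh1
          - (∫ x, ηh0 x * (if 1 ≤ ηh0 x * (2 + θ / ph0) then (1:ℝ) else 0) ∂μ0) / mh0|
        + 2 * (⨆ t ∈ Icc (0:ℝ) 1,
            |(∫ x, ηh1 x * (if t ≤ ηh1 x then (1:ℝ) else 0) ∂μ1)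
              - (∫ x, ηh1 x * (if t ≤ ηh1 x then (1:ℝ) else 0) ∂ν1)|) / mh1
        + 2 * (⨆ t ∈ Icc (0:ℝ) 1,
            |(∫ x, ηh0 x * (if t ≤ ηh0 x then (1:ℝ) else 0) ∂μ0)
              - (∫ x, ηh0 x * (if t ≤ ηh0 x then (1:ℝ) else 0) ∂ν0)|) / mh0 := by
  intro θ
  have h1 := key_bound μ1 ν1 ηh1 hηh1m hηh101 mh1 hmh1 hmh1pos hν1pos (2 - θ / ph1)
  have h0 := key_bound μ0 ν0 ηh0 hηh0m hηh001 mh0 hmh0 hmh0pos hν0pos (2 + θ / ph0)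
  set X := (∫ x, ηh1 x * (if 1 ≤ ηh1 x * (2 - θ / ph1) then (1:ℝ) else 0) ∂ν1)
      / (∫ x, ηh1 x ∂ν1)
  set Y := (∫ x, ηh0 x * (if 1 ≤ ηh0 x * (2 + θ / ph0) then (1:ℝ) else 0) ∂ν0)
      / (∫ x, ηh0 x ∂ν0)
  set X' := (∫ x, ηh1 x * (if 1 ≤ ηh1 x * (2 - θ / ph1) then (1:ℝ) else 0) ∂μ1) / mh1
  set Y' := (∫ x, ηh0 x * (if 1 ≤ ηh0 x * (2 + θ / ph0) then (1:ℝ) else 0) ∂μ0) / mh0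
  calc |X - Y| ≤ |X - X'| + |X' - Y| := abs_sub_le _ _ _
    _ ≤ |X - X'| + (|X' - Y'| + |Y' - Y|) := by linarith [abs_sub_le X' Y' Y]
    _ = |X' - Y'| + |X - X'| + |Y - Y'| := by rw [abs_sub_comm Y' Y]; ring
    _ ≤ _ := by
        refine add_le_add (add_le_add le_rfl h1) ?_
        exact h0
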